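/- arXiv:2304.08694 — 6 statements merged into one kernel-verified Lean document; each statement's English description precedes it below -/
import Mathlib

section
/- Let A = {0 = a₀ < a₁ < … < a_ℓ < a_{ℓ+1} = m} ⊆ ℤ with gcd(A)=1 and t ≥ 1. For every h ≥ ⌊(Fr_t(A)+m)/a₁⌋ + ⌊(Fr_t(m−A)+m)/(m−a_ℓ)⌋, the set (hA)^{(t)} equals [0, hm] ∖ (E_t(A) ∪ (hm − E_t(m−A))). -/
open Finset


section General
variable {r : ℕ} (w : Fin r → ℕ)

lemma finite_reps (hw : ∀ i, 1 ≤ w i) (n : ℕ) :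
    {k : Fin r → ℕ | ∑ i, k i * w i = n}.Finite := by
  apply Set.Finite.subset (Set.finite_Icc (fun _ : Fin r => 0) (fun _ => n))
  intro k hk
  simp only [Set.mem_setOf_eq] at hk
  simp only [Set.mem_Icc]
  refine ⟨fun i => Nat.zero_le _, fun i => ?_⟩
  calc k i ≤ k i * w i := Nat.le_mul_of_pos_right _ (hw i)
  _ ≤ ∑ j, k j * w j := Finset.single_le_sum (f := fun j => k j * w j)
      (fun j _ => Nat.zero_le _) (mem_univ i)
  _ = n := hk

lemma finite_subtype_reps (hw : ∀ i, 1 ≤ w i) (n : ℕ) :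
    Finite {k : Fin r → ℕ // ∑ i, k i * w i = n} :=
  (finite_reps w hw n).to_subtype

lemma finite_subtype_repsLe (hw : ∀ i, 1 ≤ w i) (n h : ℕ) :
    Finite {k : Fin r → ℕ // (∑ i, k i * w i = n) ∧ ∑ i, k i ≤ h} := by
  haveI : Finite {k : Fin r → ℕ // ∑ i, k i * w i = n} := (finite_reps w hw n).to_subtype
  exact Finite.of_injective (fun k => (⟨k.1, k.2.1⟩ : {k : Fin r → ℕ // ∑ i, k i * w i = n}))
    (by intro x y hxy; simpa [Subtype.ext_iff] using hxy)

lemma card_repsLe_le_reps (hw : ∀ i, 1 ≤ w i) (n h : ℕ) :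
    Nat.card {k : Fin r → ℕ // (∑ i, k i * w i = n) ∧ ∑ i, k i ≤ h} ≤
      Nat.card {k : Fin r → ℕ // ∑ i, k i * w i = n} := by
  haveI : Finite {k : Fin r → ℕ // ∑ i, k i * w i = n} := finite_subtype_reps w hw n
  exact Nat.card_le_card_of_injective
    (fun k => ⟨k.1, k.2.1⟩)
    (by intro x y hxy; simpa [Subtype.ext_iff] using hxy)

lemma card_repsLe_mono (hw : ∀ i, 1 ≤ w i) (n : ℕ) {h h' : ℕ} (hhh : h ≤ h') :
    Nat.card {k : Fin r → ℕ // (∑ i, k i * w i = n) ∧ ∑ i, k i ≤ h} ≤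
      Nat.card {k : Fin r → ℕ // (∑ i, k i * w i = n) ∧ ∑ i, k i ≤ h'} := by
  haveI := finite_subtype_repsLe w hw n h'
  haveI : Finite {k : Fin r → ℕ // (∑ i, k i * w i = n) ∧ ∑ i, k i ≤ h'} := finite_subtype_repsLe w hw n h'
  exact Nat.card_le_card_of_injective
    (fun k => ⟨k.1, k.2.1, k.2.2.trans hhh⟩)
    (by intro x y hxy; simpa [Subtype.ext_iff] using hxy)

lemma sum_le_of_rep {w0 : ℕ} (hw : ∀ i, w0 ≤ w i) {k : Fin r → ℕ} {n : ℕ}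
    (hk : ∑ i, k i * w i = n) : w0 * ∑ i, k i ≤ n := by
  rw [Finset.mul_sum, ← hk]
  exact Finset.sum_le_sum fun i _ => by
    rw [Nat.mul_comm]; exact Nat.mul_le_mul_left _ (hw i)

lemma card_reps_le_repsLe (hw : ∀ i, 1 ≤ w i) (n h : ℕ)
    (hb : ∀ k : Fin r → ℕ, (∑ i, k i * w i = n) → ∑ i, k i ≤ h) :
    Nat.card {k : Fin r → ℕ // ∑ i, k i * w i = n} ≤
      Nat.card {k : Fin r → ℕ // (∑ i, k i * w i = n) ∧ ∑ i, k i ≤ h} := by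
  haveI : Finite {k : Fin r → ℕ // (∑ i, k i * w i = n) ∧ ∑ i, k i ≤ h} := finite_subtype_repsLe w hw n h
  exact Nat.card_le_card_of_injective
    (fun k => ⟨k.1, k.2, hb k.1 k.2⟩)
    (by intro x y hxy; simpa [Subtype.ext_iff] using hxy)

lemma card_shift (hw : ∀ i, 1 ≤ w i) (i0 : Fin r) (n p q : ℕ) :
    Nat.card {k : Fin r → ℕ // (∑ i, k i * w i = n) ∧ ∑ i, k i ≤ p} ≤
      Nat.card {k : Fin r → ℕ //
        (∑ i, k i * w i = n + q * w i0) ∧ ∑ i, k i ≤ p + q} := by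
  haveI : Finite {k : Fin r → ℕ // (∑ i, k i * w i = n + q * w i0) ∧ ∑ i, k i ≤ p + q} := finite_subtype_repsLe w hw (n + q * w i0) (p + q)
  refine Nat.card_le_card_of_injective (fun k =>
    ⟨fun i => k.1 i + if i = i0 then q else 0, ?_, ?_⟩) ?_
  · rw [Finset.sum_congr rfl (fun i _ => Nat.add_mul (k.1 i) _ (w i)), Finset.sum_add_distrib,
      k.2.1]
    congr 1
    simp [Finset.sum_ite_eq' Finset.univ i0 (fun _ => q * w i0)]
  · calc ∑ i, (k.1 i + if i = i0 then q else 0)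
        = (∑ i, k.1 i) + ∑ i, (if i = i0 then q else 0) := Finset.sum_add_distrib
    _ ≤ p + q := by
        have : (∑ i : Fin r, (if i = i0 then q else 0)) = q := by simp
        rw [this]; exact Nat.add_le_add_right k.2.2 q
  · intro x y hxy
    apply Subtype.ext
    funext i
    have := congrArg (fun f => f.1 i) hxy
    simpa using this

end General


lemma bezout_finset {ι : Type*} [DecidableEq ι] (s : Finset ι) (f : ι → ℕ) :
    ∃ x : ι → ℤ, ∑ i ∈ s, x i * (f i : ℤ) = ((Finset.gcd s f : ℕ) : ℤ) := by
  induction s using Finset.induction_on with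
  | empty => exact ⟨fun _ => 0, by simp⟩
  | @insert b s' ha ih =>
    obtain ⟨x, hx⟩ := ih
    refine ⟨fun i => if i = b then Nat.gcdA (f b) (Finset.gcd s' f)
      else x i * Nat.gcdB (f b) (Finset.gcd s' f), ?_⟩
    rw [Finset.sum_insert ha, Finset.gcd_insert]
    simp only [if_pos rfl]
    have : ∑ i ∈ s', (if i = b then Nat.gcdA (f b) (Finset.gcd s' f)
        else x i * Nat.gcdB (f b) (Finset.gcd s' f)) * (f i : ℤ)
        = (∑ i ∈ s', x i * (f i : ℤ)) * Nat.gcdB (f b) (Finset.gcd s' f) := by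
      rw [Finset.sum_mul]
      refine Finset.sum_congr rfl fun i hi => ?_
      rw [if_neg (by rintro rfl; exact ha hi)]; ring
    rw [this, hx]
    have hgab := Nat.gcd_eq_gcd_ab (f b) (Finset.gcd s' f)
    have hg : (GCDMonoid.gcd (f b) (Finset.gcd s' f) : ℕ) = Nat.gcd (f b) (Finset.gcd s' f) := rfl
    rw [hg]
    simp only [if_pos]
    linarith [hgab]

section Frob
variable {r m : ℕ} (w : Fin r → ℕ)

lemma residues (hm : 0 < m) (hgcd : Finset.gcd Finset.univ w = 1) (n : ℕ) :
    ∃ c : Fin r → ℕ, (∀ i, c i < m) ∧ (∑ i, c i * w i) % m = n % m := by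
  obtain ⟨x, hx⟩ := bezout_finset Finset.univ w
  rw [hgcd] at hx
  set c : Fin r → ℕ := fun i => ((n * x i) % m).toNat with hc
  have hcast : ∀ i, ((c i : ℕ) : ℤ) = (n * x i) % m := fun i =>
    Int.toNat_of_nonneg (Int.emod_nonneg _ (by exact_mod_cast hm.ne'))
  refine ⟨c, fun i => ?_, ?_⟩
  · have h2 : (n * x i) % (m:ℤ) < m := Int.emod_lt_of_pos _ (by exact_mod_cast hm)
    have := hcast i
    omega
  · have hterm : ∀ i : Fin r, (m:ℤ) ∣ ((c i : ℤ) - n * x i) := by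
      intro i
      rw [hcast i]
      exact ⟨-((n * x i) / m), by rw [Int.emod_def]; ring⟩
    have hdvd : (m:ℤ) ∣ (∑ i, (c i:ℤ) * w i) - n := by
      have key : (∑ i, ((c i:ℤ) - n * x i) * w i) = (∑ i, (c i:ℤ) * w i) - n := by
        have e1 : (∑ i, ((c i:ℤ) - n * x i) * w i)
            = (∑ i, (c i:ℤ) * w i) - n * ∑ i, x i * w i := by
          rw [Finset.mul_sum, ← Finset.sum_sub_distrib]
          exact Finset.sum_congr rfl fun i _ => by ring
        rw [e1, hx]; ring
      rw [← key]
      exact Finset.dvd_sum fun i _ => Dvd.dvd.mul_right (hterm i) _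
    have hmod : ((∑ i, c i * w i : ℕ) : ℤ) % m = ((n:ℕ):ℤ) % m := by
      have hcc : ((∑ i, c i * w i : ℕ) : ℤ) = ∑ i, (c i:ℤ) * w i := by push_cast; rfl
      have h2 : (n:ℤ) % m = (∑ i, (c i:ℤ) * w i) % m := Int.modEq_iff_dvd.mpr hdvd
      rw [hcc, h2]
    exact_mod_cast hmod

variable (i₁ iₘ : Fin r)

lemma exists_rep (hm : 0 < m) (hgcd : Finset.gcd Finset.univ w = 1)
    (him : w iₘ = m) (hne : i₁ ≠ iₘ) (n : ℕ) (hn : m * ∑ i, w i ≤ n) :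
    ∃ k : Fin r → ℕ, (∑ i, k i * w i = n) ∧ k i₁ < m := by
  obtain ⟨c, hclt, hcmod⟩ := residues w hm hgcd n
  set s := ∑ i, c i * w i with hs
  have hsle : s ≤ m * ∑ i, w i := by
    rw [Finset.mul_sum]
    exact Finset.sum_le_sum fun i _ => Nat.mul_le_mul_right _ (hclt i).le
  have hsn : s ≤ n := hsle.trans hn
  have hdvd : m ∣ n - s := (Nat.modEq_iff_dvd' hsn).mp hcmod
  refine ⟨fun i => c i + if i = iₘ then (n - s)/m else 0, ?_, ?_⟩
  · rw [Finset.sum_congr rfl (fun i _ => Nat.add_mul (c i) _ (w i)), Finset.sum_add_distrib]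
    have : (∑ i, (if i = iₘ then (n - s)/m else 0) * w i) = (n - s)/m * w iₘ := by
      rw [Finset.sum_eq_single iₘ]
      · rw [if_pos rfl]
      · intro i _ hi; rw [if_neg hi, Nat.zero_mul]
      · intro hh; exact absurd (Finset.mem_univ iₘ) hh
    rw [this, him, Nat.div_mul_cancel hdvd]
    omega
  · show c i₁ + (if i₁ = iₘ then (n - s)/m else 0) < m
    rw [if_neg hne]
    simpa using hclt i₁

lemma card_reps_ge (hm : 0 < m) (hgcd : Finset.gcd Finset.univ w = 1)
    (hw : ∀ i, 1 ≤ w i) (him : w iₘ = m) (hne : i₁ ≠ iₘ) (t n : ℕ)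
    (hn : m * ∑ i, w i + t * (m * w i₁) ≤ n) :
    t ≤ Nat.card {k : Fin r → ℕ // ∑ i, k i * w i = n} := by
  haveI : Finite {k : Fin r → ℕ // ∑ i, k i * w i = n} := finite_subtype_reps w hw n
  have H : ∀ j : Fin t, ∃ k : Fin r → ℕ,
      (∑ i, k i * w i = n - j.val * (m * w i₁)) ∧ k i₁ < m := by
    intro j
    refine exists_rep w i₁ iₘ hm hgcd him hne _ ?_
    have : j.val * (m * w i₁) ≤ t * (m * w i₁) := Nat.mul_le_mul_right _ j.2.le
    omega
  choose k hk hklt using H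
  have hjle : ∀ j : Fin t, j.val * (m * w i₁) ≤ n := by
    intro j
    have : j.val * (m * w i₁) ≤ t * (m * w i₁) := Nat.mul_le_mul_right _ j.2.le
    omega
  have := Nat.card_le_card_of_injective
    (fun j : Fin t => (⟨fun i => k j i + if i = i₁ then j.val * m else 0, by
      rw [Finset.sum_congr rfl (fun i _ => Nat.add_mul (k j i) _ (w i)),
        Finset.sum_add_distrib, hk j]
      have : (∑ i, (if i = i₁ then j.val * m else 0) * w i) = j.val * m * w i₁ := by
        rw [Finset.sum_eq_single i₁]
        · rw [if_pos rfl]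
        · intro i _ hi; rw [if_neg hi, Nat.zero_mul]
        · intro hh; exact absurd (Finset.mem_univ i₁) hh
      rw [this]
      have := hjle j
      have e : j.val * m * w i₁ = j.val * (m * w i₁) := by ring
      omega⟩ : {k : Fin r → ℕ // ∑ i, k i * w i = n})) ?_
  · simpa using this
  · intro j j' hjj
    have he : k j i₁ + j.val * m = k j' i₁ + j'.val * m := by
      have := congrArg (fun z => z.1 i₁) hjj
      simpa using this
    have h1 := hklt j
    have h2 := hklt j'
    have : j.val = j'.val := by
      rcases Nat.lt_trichotomy j.val j'.val with hlt | heq | hgt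
      · have : (j.val + 1) * m ≤ j'.val * m := Nat.mul_le_mul_right _ hlt
        rw [Nat.succ_mul] at this
        omega
      · exact heq
      · have : (j'.val + 1) * m ≤ j.val * m := Nat.mul_le_mul_right _ hgt
        rw [Nat.succ_mul] at this
        omega
    exact Fin.ext this

lemma bddAbove_E (hm : 0 < m) (hgcd : Finset.gcd Finset.univ w = 1)
    (hw : ∀ i, 1 ≤ w i) (him : w iₘ = m) (hne : i₁ ≠ iₘ) (t : ℕ) :
    BddAbove {n : ℕ | Nat.card {k : Fin r → ℕ // ∑ i, k i * w i = n} < t} := by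
  refine ⟨m * ∑ i, w i + t * (m * w i₁), fun n hn => ?_⟩
  simp only [Set.mem_setOf_eq] at hn
  by_contra hcon
  push_neg at hcon
  exact absurd (card_reps_ge w i₁ iₘ hm hgcd hw him hne t n hcon.le) (Nat.not_le.mpr hn)

lemma gt_sSup_card (hm : 0 < m) (hgcd : Finset.gcd Finset.univ w = 1)
    (hw : ∀ i, 1 ≤ w i) (him : w iₘ = m) (hne : i₁ ≠ iₘ) (t : ℕ) {n : ℕ}
    (hn : sSup {n : ℕ | Nat.card {k : Fin r → ℕ // ∑ i, k i * w i = n} < t} < n) :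
    t ≤ Nat.card {k : Fin r → ℕ // ∑ i, k i * w i = n} := by
  by_contra hcon
  push_neg at hcon
  exact absurd (le_csSup (bddAbove_E w i₁ iₘ hm hgcd hw him hne t) hcon) (Nat.not_le.mpr hn)

end Frob

lemma sym_card (ℓ m : ℕ) (a : ℕ → ℕ) (ha0 : a 0 = 0) (ham : a (ℓ+1) = m)
    (hub : ∀ i, i ≤ ℓ + 1 → a i ≤ m) (n h : ℕ) (hn : n ≤ h * m) :
    Nat.card {K : Fin (ℓ+1) → ℕ // (∑ i, K i * a (i.val+1) = n) ∧ ∑ i, K i ≤ h} =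
    Nat.card {k : Fin (ℓ+1) → ℕ // (∑ i, k i * (m - a i.val) = h*m - n) ∧ ∑ i, k i ≤ h} := by
  have hub' : ∀ j : Fin ℓ, a (j.val + 1) ≤ m := fun j => hub _ (by omega)
  apply Nat.card_congr
  refine ⟨fun K => ⟨fun i => Fin.cases (h - ∑ i, K.1 i) (fun j : Fin ℓ => K.1 j.castSucc) i,
      ?_, ?_⟩,
    fun k => ⟨fun i => Fin.lastCases (h - ∑ i, k.1 i) (fun j : Fin ℓ => k.1 j.succ) i,
      ?_, ?_⟩, ?_, ?_⟩
  case refine_1 =>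
    obtain ⟨K, hK, hKs⟩ := K
    have e1 : ∑ i, K i = (∑ j : Fin ℓ, K j.castSucc) + K (Fin.last ℓ) :=
      Fin.sum_univ_castSucc _
    have e2 : n = (∑ j : Fin ℓ, K j.castSucc * a (j.val + 1)) + K (Fin.last ℓ) * m := by
      rw [← hK, Fin.sum_univ_castSucc]
      simp [ham]
    have e3 : ∑ j : Fin ℓ, K j.castSucc * a (j.val + 1) ≤ (∑ j : Fin ℓ, K j.castSucc) * m := by
      rw [Finset.sum_mul]
      exact Finset.sum_le_sum fun j _ => Nat.mul_le_mul_left _ (hub' j)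
    have e4 : ∑ j : Fin ℓ, K j.castSucc * (m - a (j.val + 1))
        = (∑ j : Fin ℓ, K j.castSucc) * m - ∑ j : Fin ℓ, K j.castSucc * a (j.val + 1) := by
      rw [Finset.sum_mul, ← Finset.sum_tsub_distrib]
      · exact Finset.sum_congr rfl fun j _ => mul_tsub _ _ _
      · exact fun j _ => Nat.mul_le_mul_left _ (hub' j)
    rw [Fin.sum_univ_succ]
    simp only [Fin.cases_zero, Fin.cases_succ, Fin.val_zero, ha0, Nat.sub_zero, Fin.val_succ]
    rw [e4, tsub_mul]
    have p2 : (∑ i, K i) * m = (∑ j : Fin ℓ, K j.castSucc) * m + K (Fin.last ℓ) * m := by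
      rw [e1, Nat.add_mul]
    have p3 : (∑ i, K i) * m ≤ h * m := Nat.mul_le_mul_right _ hKs
    omega
  case refine_2 =>
    obtain ⟨K, hK, hKs⟩ := K
    have e1 : ∑ i, K i = (∑ j : Fin ℓ, K j.castSucc) + K (Fin.last ℓ) :=
      Fin.sum_univ_castSucc _
    rw [Fin.sum_univ_succ]
    simp only [Fin.cases_zero, Fin.cases_succ]
    omega
  case refine_3 =>
    obtain ⟨k, hk, hks⟩ := k
    have e1 : ∑ i, k i = k 0 + ∑ j : Fin ℓ, k j.succ := Fin.sum_univ_succ _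
    have e2 : h * m - n = k 0 * m + ∑ j : Fin ℓ, k j.succ * (m - a (j.val + 1)) := by
      rw [← hk, Fin.sum_univ_succ]
      simp [ha0]
    have e3 : (∑ j : Fin ℓ, k j.succ * (m - a (j.val + 1)))
        + (∑ j : Fin ℓ, k j.succ * a (j.val + 1)) = (∑ j : Fin ℓ, k j.succ) * m := by
      rw [← Finset.sum_add_distrib, Finset.sum_mul]
      exact Finset.sum_congr rfl fun j _ => by
        rw [mul_tsub, Nat.sub_add_cancel (Nat.mul_le_mul_left _ (hub' j))]
    rw [Fin.sum_univ_castSucc]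
    simp only [Fin.lastCases_last, Fin.lastCases_castSucc, Fin.coe_castSucc, Fin.val_last, ham]
    rw [tsub_mul]
    have p2 : (∑ i, k i) * m = k 0 * m + (∑ j : Fin ℓ, k j.succ) * m := by
      rw [e1, Nat.add_mul]
    have p3 : (∑ i, k i) * m ≤ h * m := Nat.mul_le_mul_right _ hks
    omega
  case refine_4 =>
    obtain ⟨k, hk, hks⟩ := k
    have e1 : ∑ i, k i = k 0 + ∑ j : Fin ℓ, k j.succ := Fin.sum_univ_succ _
    rw [Fin.sum_univ_castSucc]
    simp only [Fin.lastCases_last, Fin.lastCases_castSucc]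
    omega
  case refine_5 =>
    intro K
    apply Subtype.ext
    obtain ⟨K, hK, hKs⟩ := K
    funext i
    induction i using Fin.lastCases with
    | last =>
      simp only [Fin.lastCases_last]
      rw [Fin.sum_univ_succ]
      simp only [Fin.cases_zero, Fin.cases_succ]
      have e1 : ∑ i, K i = (∑ j : Fin ℓ, K j.castSucc) + K (Fin.last ℓ) :=
        Fin.sum_univ_castSucc _
      omega
    | cast j =>
      simp [Fin.lastCases_castSucc, Fin.cases_succ]
  case refine_6 =>
    intro k
    apply Subtype.ext
    obtain ⟨k, hk, hks⟩ := k
    funext i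
    induction i using Fin.cases with
    | zero =>
      simp only [Fin.cases_zero]
      rw [Fin.sum_univ_castSucc]
      simp only [Fin.lastCases_last, Fin.lastCases_castSucc]
      have e1 : ∑ i, k i = k 0 + ∑ j : Fin ℓ, k j.succ := Fin.sum_univ_succ _
      omega
    | succ j =>
      simp [Fin.cases_succ, Fin.lastCases_castSucc]

/-- Theorem MT1: for `h ≥ ⌊(Fr_t(A)+m)/a₁⌋ + ⌊(Fr_t(m−A)+m)/(m−a_ℓ)⌋`, the set
`(hA)^{(t)}` equals `[0,hm] ∖ (E_t(A) ∪ (hm − E_t(m−A)))`; i.e. `n ∈ (hA)^{(t)}` iff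
`n ≤ hm`, `ρ_A(n) ≥ t` and `ρ_{m−A}(hm−n) ≥ t`. -/
theorem stmt_10 (ℓ m : ℕ) (a : ℕ → ℕ)
    (ha0 : a 0 = 0) (ham : a (ℓ + 1) = m)
    (hmono : ∀ i ≤ ℓ, a i < a (i + 1))
    (hgcd : Finset.gcd (Finset.range (ℓ + 2)) a = 1)
    (t : ℕ) (ht : 1 ≤ t)
    (FrA FrmA : ℕ)
    (hFrA : FrA = sSup {n : ℕ |
        Nat.card {k : Fin (ℓ + 1) → ℕ // ∑ i, k i * a (i.val + 1) = n} < t})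
    (hFrmA : FrmA = sSup {n : ℕ |
        Nat.card {k : Fin (ℓ + 1) → ℕ // ∑ i, k i * (m - a i.val) = n} < t})
    (h : ℕ) (hh : (FrA + m) / (a 1) + (FrmA + m) / (m - a ℓ) ≤ h) (n : ℕ) :
    t ≤ Nat.card {K : Fin (ℓ + 1) → ℕ //
          ∑ i, K i * a (i.val + 1) = n ∧ ∑ i, K i ≤ h}
      ↔ (n ≤ h * m
          ∧ t ≤ Nat.card {k : Fin (ℓ + 1) → ℕ // ∑ i, k i * a (i.val + 1) = n}
          ∧ t ≤ Nat.card {k : Fin (ℓ + 1) → ℕ //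
              ∑ i, k i * (m - a i.val) = h * m - n}) := by
  obtain ⟨SA, hSAdef⟩ : ∃ S : Set ℕ, {n : ℕ |
      Nat.card {k : Fin (ℓ + 1) → ℕ // ∑ i, k i * a (i.val + 1) = n} < t} = S := ⟨_, rfl⟩
  obtain ⟨SC, hSCdef⟩ : ∃ S : Set ℕ, {n : ℕ |
      Nat.card {k : Fin (ℓ + 1) → ℕ // ∑ i, k i * (m - a i.val) = n} < t} = S := ⟨_, rfl⟩
  rw [hSAdef] at hFrA
  rw [hSCdef] at hFrmA
  -- monotonicity facts
  have mono : ∀ i j, i ≤ j → j ≤ ℓ + 1 → a i ≤ a j := by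
    intro i j hij hj
    induction j with
    | zero =>
      have : i = 0 := by omega
      rw [this]
    | succ j ih =>
      rcases Nat.lt_or_ge i (j+1) with hlt | hge
      · exact (ih (by omega) (by omega)).trans (hmono j (by omega)).le
      · have : i = j + 1 := by omega
        subst this; rfl
  have hm : 0 < m := by
    have h1 : a 0 < a 1 := by simpa using hmono 0 (Nat.zero_le _)
    have h2 : a 1 ≤ a (ℓ+1) := mono 1 (ℓ+1) (by omega) le_rfl
    omega
  have a1pos : 0 < a 1 := by
    have h1 : a 0 < a 1 := by simpa using hmono 0 (Nat.zero_le _)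
    omega
  have halm : a ℓ < m := by
    have := hmono ℓ le_rfl; omega
  set b : Fin (ℓ+1) → ℕ := fun i => a (i.val + 1) with hb
  set c : Fin (ℓ+1) → ℕ := fun i => m - a i.val with hc
  have hbub : ∀ i, b i ≤ m := fun i => by
    rw [← ham]; exact mono _ _ (by omega) le_rfl
  have hb1 : ∀ i, a 1 ≤ b i := fun i => mono 1 _ (by omega) (by omega)
  have hbpos : ∀ i, 1 ≤ b i := fun i => a1pos.trans_le (hb1 i)
  have hcl : ∀ i, m - a ℓ ≤ c i := fun i => by
    have : a i.val ≤ a ℓ := mono _ _ (by omega) (by omega)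
    simp only [hc]; omega
  have hcpos : ∀ i, 1 ≤ c i := fun i => le_trans (by omega) (hcl i)
  have hub : ∀ i, i ≤ ℓ + 1 → a i ≤ m := fun i hi => by
    rw [← ham]; exact mono _ _ hi le_rfl
  -- gcd transfer
  have gb : Finset.gcd Finset.univ b = 1 := by
    have hdvd : Finset.gcd Finset.univ b ∣ Finset.gcd (Finset.range (ℓ+2)) a := by
      apply Finset.dvd_gcd
      intro i hi
      rw [Finset.mem_range] at hi
      rcases Nat.eq_zero_or_pos i with rfl | hpos
      · rw [ha0]; exact dvd_zero _
      · have hlt : i - 1 < ℓ + 1 := by omega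
        have h2 := Finset.gcd_dvd (f := b) (Finset.mem_univ (⟨i-1, hlt⟩ : Fin (ℓ+1)))
        have e : i - 1 + 1 = i := by omega
        simpa only [hb, e] using h2
    rw [hgcd] at hdvd
    exact Nat.dvd_one.mp hdvd
  have gc : Finset.gcd Finset.univ c = 1 := by
    have hdm : Finset.gcd Finset.univ c ∣ m := by
      have h2 := Finset.gcd_dvd (f := c) (Finset.mem_univ (0 : Fin (ℓ+1)))
      simpa only [hc, Fin.val_zero, ha0, Nat.sub_zero] using h2
    have hdvd : Finset.gcd Finset.univ c ∣ Finset.gcd (Finset.range (ℓ+2)) a := by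
      apply Finset.dvd_gcd
      intro i hi
      rw [Finset.mem_range] at hi
      rcases Nat.lt_or_ge i (ℓ+1) with hlt | hge
      · have h2 := Finset.gcd_dvd (f := c) (Finset.mem_univ (⟨i, hlt⟩ : Fin (ℓ+1)))
        simp only [hc] at h2
        have h3 : Finset.gcd Finset.univ c ∣ m - (m - a i) := Nat.dvd_sub hdm h2
        have e : m - (m - a i) = a i := by
          have := hub i (by omega); omega
        rwa [e] at h3
      · have : i = ℓ + 1 := by omega
        rw [this, ham]; exact hdm
    rw [hgcd] at hdvd
    exact Nat.dvd_one.mp hdvd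
  have hblast : b (Fin.last ℓ) = m := by simp only [hb, Fin.val_last]; exact ham
  have hc0 : c 0 = m := by simp only [hc, Fin.val_zero, ha0, Nat.sub_zero]
  -- symmetric card identity
  have hsym : ∀ hn : n ≤ h * m,
      Nat.card {K : Fin (ℓ+1) → ℕ // (∑ i, K i * a (i.val+1) = n) ∧ ∑ i, K i ≤ h} =
      Nat.card {k : Fin (ℓ+1) → ℕ // (∑ i, k i * (m - a i.val) = h*m - n) ∧ ∑ i, k i ≤ h} :=
    fun hn => sym_card ℓ m a ha0 ham hub n h hn
  rcases Nat.eq_zero_or_pos ℓ with rfl | hl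
  · -- degenerate case ℓ = 0, m = 1
    have hm1 : m = 1 := Nat.dvd_one.mp (by
      rw [← hgcd]
      refine Finset.dvd_gcd fun i hi => ?_
      rw [Finset.mem_range] at hi
      interval_cases i
      · rw [ha0]; exact dvd_zero m
      · rw [show a 1 = m from ham])
    subst hm1
    have ha1 : a 1 = 1 := ham
    have hone : ∀ k : Fin 1 → ℕ, ∑ i, k i * a (i.val + 1) = k 0 := by
      intro k; rw [Fin.sum_univ_one]; simp [ha1]
    have hone' : ∀ k : Fin 1 → ℕ, ∑ i, k i * (1 - a i.val) = k 0 := by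
      intro k; rw [Fin.sum_univ_one]; simp [ha0]
    have hsum1 : ∀ k : Fin 1 → ℕ, ∑ i, k i = k 0 := fun k => Fin.sum_univ_one k
    have E1 : ∀ v : ℕ, Nat.card {k : Fin 1 → ℕ // ∑ i, k i * a (i.val + 1) = v} = 1 := by
      intro v
      rw [Nat.card_eq_one_iff_unique]
      constructor
      · constructor
        intro x y
        apply Subtype.ext; funext i
        have : i = 0 := Subsingleton.elim _ _
        subst this
        have hx := x.2; have hy := y.2
        rw [hone] at hx hy
        rw [hx, hy]
      · exact ⟨⟨fun _ => v, by rw [hone]⟩⟩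
    have E2 : ∀ v : ℕ, Nat.card {k : Fin 1 → ℕ // ∑ i, k i * (1 - a i.val) = v} = 1 := by
      intro v
      rw [Nat.card_eq_one_iff_unique]
      constructor
      · constructor
        intro x y
        apply Subtype.ext; funext i
        have : i = 0 := Subsingleton.elim _ _
        subst this
        have hx := x.2; have hy := y.2
        rw [hone'] at hx hy
        rw [hx, hy]
      · exact ⟨⟨fun _ => v, by rw [hone']⟩⟩
    rw [E1, E2]
    by_cases hnh : n ≤ h
    · have E3 : Nat.card {K : Fin 1 → ℕ //
          (∑ i, K i * a (i.val + 1) = n) ∧ ∑ i, K i ≤ h} = 1 := by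
        rw [Nat.card_eq_one_iff_unique]
        constructor
        · constructor
          intro x y
          apply Subtype.ext; funext i
          have : i = 0 := Subsingleton.elim _ _
          subst this
          have hx := x.2.1; have hy := y.2.1
          rw [hone] at hx hy
          rw [hx, hy]
        · exact ⟨⟨fun _ => n, by rw [hone], by rw [hsum1]; exact hnh⟩⟩
      rw [E3]
      constructor
      · intro h1
        exact ⟨by clear hsym E3; omega, h1, h1⟩
      · rintro ⟨-, h2, -⟩
        exact h2
    · have E4 : Nat.card {K : Fin 1 → ℕ //
          (∑ i, K i * a (i.val + 1) = n) ∧ ∑ i, K i ≤ h} = 0 := by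
        have : IsEmpty {K : Fin 1 → ℕ //
            (∑ i, K i * a (i.val + 1) = n) ∧ ∑ i, K i ≤ h} := by
          constructor
          rintro ⟨K, hK1, hK2⟩
          rw [hone] at hK1
          rw [hsum1] at hK2
          clear hsym
          omega
        exact Nat.card_of_isEmpty
      rw [E4]
      constructor
      · intro h1; clear hsym E4; omega
      · rintro ⟨h1, -, -⟩
        clear hsym E4
        omega
  -- main case ℓ ≥ 1
  have hne1 : (0 : Fin (ℓ+1)) ≠ Fin.last ℓ := by
    rw [Ne, Fin.ext_iff, Fin.val_zero, Fin.val_last]; omega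
  have P1A : ∀ x : ℕ, FrA < x →
      t ≤ Nat.card {k : Fin (ℓ+1) → ℕ // ∑ i, k i * a (i.val+1) = x} := by
    intro x hx
    rw [hFrA, ← hSAdef] at hx
    exact gt_sSup_card b 0 (Fin.last ℓ) hm gb hbpos hblast hne1 t hx
  have P1C : ∀ x : ℕ, FrmA < x →
      t ≤ Nat.card {k : Fin (ℓ+1) → ℕ // ∑ i, k i * (m - a i.val) = x} := by
    intro x hx
    rw [hFrmA, ← hSCdef] at hx
    exact gt_sSup_card c (Fin.last ℓ) 0 hm gc hcpos hc0 hne1.symm t hx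
  constructor
  · intro hL
    have hpos : 0 < Nat.card {K : Fin (ℓ+1) → ℕ //
        (∑ i, K i * a (i.val+1) = n) ∧ ∑ i, K i ≤ h} := lt_of_lt_of_le ht hL
    have hne : Nonempty {K : Fin (ℓ+1) → ℕ //
        (∑ i, K i * a (i.val+1) = n) ∧ ∑ i, K i ≤ h} := (Nat.card_pos_iff.mp hpos).1
    obtain ⟨⟨K, hK, hKs⟩⟩ := hne
    have hn : n ≤ h * m := by
      have h1 : ∑ i, K i * a (i.val+1) ≤ ∑ i, K i * m :=
        Finset.sum_le_sum fun i _ => Nat.mul_le_mul_left _ (hbub i)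
      have h2 : ∑ i, K i * m = (∑ i, K i) * m := (Finset.sum_mul ..).symm
      have h3 : (∑ i, K i) * m ≤ h * m := Nat.mul_le_mul_right _ hKs
      clear hsym hL hpos
      omega
    refine ⟨hn, hL.trans (card_repsLe_le_reps b hbpos n h), ?_⟩
    have := (hsym hn) ▸ hL
    exact this.trans (card_repsLe_le_reps c hcpos (h*m - n) h)
  · rintro ⟨hn, hA, hC⟩
    obtain ⟨h₁, hh1⟩ : ∃ x, x = (FrA + m) / (a 1) := ⟨_, rfl⟩
    obtain ⟨h₂, hh2⟩ : ∃ x, x = (FrmA + m) / (m - a ℓ) := ⟨_, rfl⟩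
    obtain ⟨q, hq⟩ : ∃ x, x = (n - (FrA + 1)) / m := ⟨_, rfl⟩
    obtain ⟨q', hq'⟩ : ∃ x, x = ((h * m - n) - (FrmA + 1)) / m := ⟨_, rfl⟩
    rw [← hh1, ← hh2] at hh
    have hDq := Nat.div_add_mod (n - (FrA + 1)) m
    have hRq := Nat.mod_lt (n - (FrA + 1)) hm
    have hDq' := Nat.div_add_mod ((h * m - n) - (FrmA + 1)) m
    have hRq' := Nat.mod_lt ((h * m - n) - (FrmA + 1)) hm
    have hqq : q * m = m * ((n - (FrA + 1)) / m) := by rw [hq]; exact Nat.mul_comm _ _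
    have hq'q : q' * m = m * (((h * m - n) - (FrmA + 1)) / m) := by
      rw [hq']; exact Nat.mul_comm _ _
    -- q * m ≤ n, n - q*m ≤ FrA + m, and if q ≥ 1 then FrA < n - q*m
    have hqm : q * m ≤ n := by clear hsym P1A P1C hA hC; omega
    have hq1 : n - q * m ≤ FrA + m := by clear hsym P1A P1C hA hC; omega
    have hq'm : q' * m ≤ h * m - n := by clear hsym P1A P1C hA hC; omega
    have hq'1 : (h * m - n) - q' * m ≤ FrmA + m := by clear hsym P1A P1C hA hC; omega
    by_cases hcase : q + h₁ ≤ h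
    · -- A-side construction
      have hrep : t ≤ Nat.card {k : Fin (ℓ+1) → ℕ // ∑ i, k i * a (i.val+1) = n - q * m} := by
        rcases Nat.eq_zero_or_pos q with hq0 | hqpos
        · rw [hq0]; simpa using hA
        · apply P1A
          have : m ≤ q * m := Nat.le_mul_of_pos_left m hqpos
          clear hsym P1A P1C hA hC
          omega
      have hbd : ∀ k : Fin (ℓ+1) → ℕ, (∑ i, k i * b i = n - q * m) → ∑ i, k i ≤ h₁ := by
        intro k hk
        have h1 : a 1 * ∑ i, k i ≤ n - q * m := sum_le_of_rep b hb1 hk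
        rw [hh1]
        rw [Nat.le_div_iff_mul_le a1pos]
        have h1' : (∑ i, k i) * a 1 = a 1 * ∑ i, k i := Nat.mul_comm _ _
        clear hsym P1A P1C hA hC hrep
        omega
      have s1 : t ≤ Nat.card {k : Fin (ℓ+1) → ℕ //
          (∑ i, k i * b i = n - q * m) ∧ ∑ i, k i ≤ h₁} :=
        hrep.trans (card_reps_le_repsLe b hbpos (n - q*m) h₁ hbd)
      have s2 := s1.trans (card_shift b hbpos (Fin.last ℓ) (n - q*m) h₁ q)
      rw [hblast] at s2
      have e : (n - q * m) + q * m = n := by clear hsym P1A P1C hA hC hrep s1 s2; omega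
      rw [e] at s2
      exact s2.trans (card_repsLe_mono b hbpos n
        (show h₁ + q ≤ h by clear hsym P1A P1C hA hC hrep s1 s2; omega))
    · -- B-side: first show q' + h₂ ≤ h
      have hqpos : 1 ≤ q := by
        clear hsym P1A P1C hA hC
        by_contra hq0
        have : q = 0 := by omega
        have : h₁ ≤ h := le_trans (Nat.le_add_right _ _) hh
        omega
      have hcase2 : q' + h₂ ≤ h := by
        clear hsym P1A P1C hA hC
        by_contra hcon
        push_neg at hcon
        have hq'pos : 1 ≤ q' := by
          by_contra hq'0
          have : q' = 0 := by omega
          have : h₂ ≤ h := le_trans (Nat.le_add_left _ _) hh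
          omega
        -- q*m ≤ n - FrA - 1 and q'*m ≤ (h*m - n) - FrmA - 1
        have hmq : m ≤ q * m := Nat.le_mul_of_pos_left m hqpos
        have hmq' : m ≤ q' * m := Nat.le_mul_of_pos_left m hq'pos
        -- q ≥ h - h₁ + 1, q' ≥ h - h₂ + 1 so q + q' ≥ h + 2
        have hsum : h + 2 ≤ q + q' := by omega
        have : (h + 2) * m ≤ (q + q') * m := Nat.mul_le_mul_right _ hsum
        rw [Nat.add_mul, Nat.add_mul] at this
        omega
      have hrep : t ≤ Nat.card {k : Fin (ℓ+1) → ℕ //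
          ∑ i, k i * (m - a i.val) = (h * m - n) - q' * m} := by
        rcases Nat.eq_zero_or_pos q' with hq'0 | hq'pos
        · rw [hq'0]; simpa using hC
        · apply P1C
          have : m ≤ q' * m := Nat.le_mul_of_pos_left m hq'pos
          clear hsym P1A P1C hA hC
          omega
      have hbd : ∀ k : Fin (ℓ+1) → ℕ, (∑ i, k i * c i = (h*m - n) - q' * m) →
          ∑ i, k i ≤ h₂ := by
        intro k hk
        have h1 : (m - a ℓ) * ∑ i, k i ≤ (h*m - n) - q' * m := sum_le_of_rep c hcl hk
        rw [hh2, Nat.le_div_iff_mul_le (show 0 < m - a ℓ by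
          clear hsym P1A P1C hA hC hrep; omega)]
        have h1' : (∑ i, k i) * (m - a ℓ) = (m - a ℓ) * ∑ i, k i := Nat.mul_comm _ _
        clear hsym P1A P1C hA hC hrep
        omega
      have s1 : t ≤ Nat.card {k : Fin (ℓ+1) → ℕ //
          (∑ i, k i * c i = (h*m - n) - q' * m) ∧ ∑ i, k i ≤ h₂} :=
        hrep.trans (card_reps_le_repsLe c hcpos _ h₂ hbd)
      have s2 := s1.trans (card_shift c hcpos 0 ((h*m - n) - q' * m) h₂ q')
      rw [hc0] at s2
      have e : ((h*m - n) - q' * m) + q' * m = h * m - n := by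
        clear hsym P1A P1C hA hC hrep s1 s2; omega
      rw [e] at s2
      have s3 := s2.trans (card_repsLe_mono c hcpos (h*m - n)
        (show h₂ + q' ≤ h by clear hsym P1A P1C hA hC hrep s1 s2; omega))
      rw [hsym hn]
      exact s3
end

section
/- Let m ≥ 5, 2 ≤ ℓ ≤ m/2, 0 ≤ R ≤ (m−ℓ)/(ℓ−1), A := {0,1,m−ℓ+1,…,m}, and t := C(ℓ+R, R). Then ρ_A(mR) ≥ t and ρ_{m−A}(mR) ≥ t; consequently E_t(A) and E_t(m−A) are contained in [0, mR−1]. -/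
/-- Total representation function of `A = {0, 1, m−ℓ+1, …, m}`: coefficients on the
nonzero elements `1, m−ℓ+1, …, m`. -/
noncomputable def rhoA (m ℓ n : ℕ) : ℕ :=
  Nat.card {k : Fin (ℓ + 1) → ℕ //
    k 0 * 1 + (∑ i : Fin ℓ, k i.succ * (m - ℓ + 1 + i.val)) = n}

/-- Total representation function of `m − A = {0, 1, …, ℓ−1, m−1, m}`: coefficients on
the nonzero elements `1, …, ℓ−1, m−1, m`. -/
noncomputable def rhomA (m ℓ n : ℕ) : ℕ :=
  Nat.card {k : Fin (ℓ + 1) → ℕ //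
    ∑ i : Fin (ℓ + 1), k i *
      (if i.val < ℓ - 1 then i.val + 1 else if i.val = ℓ - 1 then m - 1 else m) = n}


/-- The number of `q`-tuples of naturals with sum at most `R` is `C(q+R, R)`. -/
lemma simplex_card (q R : ℕ) :
    Nat.card {c : Fin q → ℕ // ∑ i, c i ≤ R} = (q + R).choose R := by
  have e : {c : Fin q → ℕ // ∑ i, c i ≤ R} ≃ {P : Fin (q + 1) → ℕ // ∑ i, P i = R} :=
    { toFun := fun c => ⟨Fin.cons (R - ∑ i, c.1 i) c.1, by
        rw [Fin.sum_univ_succ]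
        simp only [Fin.cons_zero, Fin.cons_succ]
        have := c.2; omega⟩
      invFun := fun P => ⟨fun i => P.1 i.succ, by
        show ∑ i : Fin q, P.1 i.succ ≤ R
        have := P.2; rw [Fin.sum_univ_succ] at this; omega⟩
      left_inv := by
        intro c; apply Subtype.ext; funext i; simp [Fin.cons_succ]
      right_inv := by
        intro P; apply Subtype.ext
        have h0 : R - ∑ i : Fin q, P.1 i.succ = P.1 0 := by
          have := P.2; rw [Fin.sum_univ_succ] at this; omega
        funext i
        rcases Fin.eq_zero_or_eq_succ i with h | ⟨j, rfl⟩
        · subst h; simpa using h0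
        · simp [Fin.cons_succ] }
  rw [Nat.card_congr e, Nat.card_congr (Sym.equivNatSumOfFintype (Fin (q + 1)) R).symm,
    Nat.card_eq_fintype_card, Sym.card_sym_eq_choose]
  congr 1
  simp

lemma key_lemma (m R n q : ℕ) (w : Fin (q + 1) → ℕ) (hw0 : w 0 = 1)
    (hw1 : ∀ i, 1 ≤ w i) (hwm : ∀ i, w i ≤ m) (hn : m * R ≤ n) :
    (q + R).choose R ≤ Nat.card {k : Fin (q + 1) → ℕ // ∑ i, k i * w i = n} := by
  have hfin : Finite {k : Fin (q + 1) → ℕ // ∑ i, k i * w i = n} := by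
    apply Finite.of_injective
      (fun k : {k : Fin (q + 1) → ℕ // ∑ i, k i * w i = n} =>
        (fun i => (⟨min (k.1 i) n, by omega⟩ : Fin (n + 1)) : Fin (q + 1) → Fin (n + 1)))
    intro a b h
    apply Subtype.ext; funext i
    have hb : ∀ k : {k : Fin (q + 1) → ℕ // ∑ i, k i * w i = n}, k.1 i ≤ n := by
      intro k
      calc k.1 i ≤ k.1 i * w i := Nat.le_mul_of_pos_right _ (hw1 i)
        _ ≤ ∑ j, k.1 j * w j := Finset.single_le_sum (f := fun j => k.1 j * w j) (fun j _ => Nat.zero_le _) (Finset.mem_univ i)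
        _ = n := k.2
    have := congrFun h i
    simp only [Fin.mk.injEq] at this
    rw [min_eq_left (hb a), min_eq_left (hb b)] at this
    exact this
  rw [← simplex_card q R]
  have hS : ∀ c : {c : Fin q → ℕ // ∑ i, c i ≤ R}, ∑ i : Fin q, c.1 i * w i.succ ≤ n := by
    intro c
    calc ∑ i : Fin q, c.1 i * w i.succ ≤ ∑ i : Fin q, c.1 i * m :=
          Finset.sum_le_sum fun i _ => Nat.mul_le_mul_left _ (hwm i.succ)
      _ = (∑ i, c.1 i) * m := by rw [Finset.sum_mul]
      _ ≤ R * m := Nat.mul_le_mul_right m c.2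
      _ ≤ n := by rwa [Nat.mul_comm]
  apply Nat.card_le_card_of_injective
    (fun c => (⟨Fin.cons (n - ∑ i : Fin q, c.1 i * w i.succ) c.1, by
      rw [Fin.sum_univ_succ]
      simp only [Fin.cons_zero, Fin.cons_succ, hw0, Nat.mul_one]
      have := hS c; omega⟩ : {k : Fin (q + 1) → ℕ // ∑ i, k i * w i = n}))
  intro a b h
  apply Subtype.ext; funext i
  have := congrArg (fun k : {k : Fin (q + 1) → ℕ // ∑ i, k i * w i = n} => k.1 i.succ) h
  simpa [Fin.cons_succ] using this

set_option maxHeartbeats 800000 in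
/-- For `A = {0,1,m−ℓ+1,…,m}` and `t = C(ℓ+R,R)`, both `mR` has at least `t`
representations by `A` and by `m−A`; consequently `E_t(A), E_t(m−A) ⊆ [0, mR−1]`. -/
theorem stmt_11 (m ℓ R : ℕ) (hm : 5 ≤ m) (hl : 2 ≤ ℓ) (hlm : 2 * ℓ ≤ m)
    (hR : (ℓ - 1) * R ≤ m - ℓ) (t : ℕ) (ht : t = (ℓ + R).choose R) :
    t ≤ rhoA m ℓ (m * R) ∧ t ≤ rhomA m ℓ (m * R) ∧
    (∀ n : ℕ, rhoA m ℓ n < t → n < m * R) ∧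
    (∀ n : ℕ, rhomA m ℓ n < t → n < m * R) := by
  have hA : ∀ n, m * R ≤ n → t ≤ rhoA m ℓ n := by
    intro n hn
    have h1 : ∀ i : Fin (ℓ + 1),
        1 ≤ (Fin.cons 1 (fun j : Fin ℓ => m - ℓ + 1 + j.val) : Fin (ℓ + 1) → ℕ) i := by
      intro i
      rcases Fin.eq_zero_or_eq_succ i with rfl | ⟨j, rfl⟩
      · simp
      · rw [Fin.cons_succ]; omega
    have h2 : ∀ i : Fin (ℓ + 1),
        (Fin.cons 1 (fun j : Fin ℓ => m - ℓ + 1 + j.val) : Fin (ℓ + 1) → ℕ) i ≤ m := by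
      intro i
      rcases Fin.eq_zero_or_eq_succ i with rfl | ⟨j, rfl⟩
      · rw [Fin.cons_zero]; omega
      · rw [Fin.cons_succ]; have := j.isLt; omega
    have hcong : rhoA m ℓ n = Nat.card {k : Fin (ℓ + 1) → ℕ //
        ∑ i, k i * (Fin.cons 1 (fun j : Fin ℓ => m - ℓ + 1 + j.val) : Fin (ℓ + 1) → ℕ) i = n} := by
      unfold rhoA
      apply Nat.card_congr (Equiv.subtypeEquivRight ?_)
      intro k
      rw [Fin.sum_univ_succ]
      simp [Fin.cons_succ]
    rw [hcong, ht]
    exact key_lemma m R n ℓ _ (by simp) h1 h2 hn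
  have hB : ∀ n, m * R ≤ n → t ≤ rhomA m ℓ n := by
    intro n hn
    rw [ht]
    unfold rhomA
    apply key_lemma m R n ℓ
      (fun i : Fin (ℓ + 1) =>
        if i.val < ℓ - 1 then i.val + 1 else if i.val = ℓ - 1 then m - 1 else m)
      ?_ ?_ ?_ hn
    · simp only [Fin.val_zero]
      exact if_pos (by omega)
    · intro i; split <;> [skip; split] <;> omega
    · intro i; have := i.isLt; split <;> [skip; split] <;> omega
  refine ⟨hA _ le_rfl, hB _ le_rfl, ?_, ?_⟩
  · intro n hlt
    by_contra h
    push_neg at h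
    exact absurd (hA n h) (not_le.2 hlt)
  · intro n hlt
    by_contra h
    push_neg at h
    exact absurd (hB n h) (not_le.2 hlt)
end

section
/- Let m ≥ 5, 2 ≤ ℓ ≤ m/2, 0 ≤ R ≤ (m−ℓ)/(ℓ−1), A := {0,1,m−ℓ+1,…,m}, t := C(ℓ+R,R), and g := (R+1)(m−ℓ+1)−1. Then ρ_A(g) = t exactly. -/
/-- Stars and bars for tuples: the number of `n`-tuples with fixed sum `R`. -/
lemma card_sum_eq (n R : ℕ) :
    Nat.card {f : Fin n → ℕ // ∑ i, f i = R} = (n + R - 1).choose R := by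
  have e : {f : Fin n → ℕ // ∑ i, f i = R} ≃ Sym (Fin n) R := by
    refine (Equiv.subtypeEquiv
      (Multiset.toFinsupp.toEquiv.trans Finsupp.equivFunOnFinite) ?_).symm
    intro m
    show Multiset.card m = R ↔ _
    rw [show (∑ i : Fin n, (Multiset.toFinsupp.toEquiv.trans
        Finsupp.equivFunOnFinite) m i) = ∑ i : Fin n, m.count i from
      Finset.sum_congr rfl fun i _ => rfl,
        Multiset.sum_count_eq_card (fun a _ => Finset.mem_univ a)]
  rw [Nat.card_congr e, Nat.card_eq_fintype_card, Sym.card_sym_eq_choose,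
    Fintype.card_fin]

/-- The number of `n`-tuples with sum at most `R`. -/
lemma card_sum_le (n R : ℕ) :
    Nat.card {f : Fin n → ℕ // ∑ i, f i ≤ R} = (n + R).choose R := by
  have e : {f : Fin n → ℕ // ∑ i, f i ≤ R} ≃
      {f : Fin (n + 1) → ℕ // ∑ i, f i = R} := by
    refine ⟨fun f => ⟨Fin.cons (R - ∑ i, f.1 i) f.1, ?_⟩,
      fun f => ⟨fun i => f.1 i.succ, ?_⟩, ?_, ?_⟩
    · rw [Fin.sum_cons]; omega
    · show ∑ i : Fin n, f.1 i.succ ≤ R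
      have := f.2
      rw [Fin.sum_univ_succ] at this
      omega
    · rintro ⟨f, hf⟩
      ext i
      simp [Fin.cons_succ]
    · rintro ⟨f, hf⟩
      rw [Fin.sum_univ_succ] at hf
      apply Subtype.ext
      funext i
      refine Fin.cases ?_ ?_ i
      · simp only [Fin.cons_zero]; omega
      · intro j; simp [Fin.cons_succ]
  rw [Nat.card_congr e, card_sum_eq]
  congr 1
  omega

/-- For `A = {0,1,m−ℓ+1,…,m}`, `t = C(ℓ+R,R)` and `g = (R+1)(m−ℓ+1)−1`, one has
`ρ_A(g) = t` exactly. -/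
theorem stmt_12 (m ℓ R : ℕ) (hm : 5 ≤ m) (hl : 2 ≤ ℓ) (hlm : 2 * ℓ ≤ m)
    (hR : (ℓ - 1) * R ≤ m - ℓ) (t : ℕ) (ht : t = (ℓ + R).choose R)
    (g : ℕ) (hg : g = (R + 1) * (m - ℓ + 1) - 1) :
    rhoA m ℓ g = t := by
  obtain ⟨a, rfl⟩ : ∃ a, m = ℓ + a := ⟨m - ℓ, by omega⟩
  have ha : ℓ ≤ a := by omega
  have hma : ℓ + a - ℓ = a := by omega
  rw [hma] at hR
  have hga : g = R * (a + 1) + a := by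
    rw [hg, hma]; ring_nf; omega
  subst ht
  rw [rhoA]
  simp only [hma]
  have key : {k : Fin (ℓ + 1) → ℕ //
      k 0 * 1 + (∑ i : Fin ℓ, k i.succ * (a + 1 + i.val)) = g} ≃
      {f : Fin ℓ → ℕ // ∑ i, f i ≤ R} := by
    refine ⟨fun k => ⟨fun i => k.1 i.succ, ?_⟩,
      fun f => ⟨Fin.cons (g - ∑ i : Fin ℓ, f.1 i * (a + 1 + i.val)) f.1, ?_⟩, ?_, ?_⟩
    · -- the sum of the large coefficients is at most R
      obtain ⟨k, hk⟩ := k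
      show ∑ i : Fin ℓ, k i.succ ≤ R
      by_contra hcon
      push_neg at hcon
      have h1 : ∑ i : Fin ℓ, k i.succ * (a + 1) ≤
          ∑ i : Fin ℓ, k i.succ * (a + 1 + i.val) :=
        Finset.sum_le_sum fun i _ => Nat.mul_le_mul_left _ (by omega)
      have h2 : (∑ i : Fin ℓ, k i.succ) * (a + 1) =
          ∑ i : Fin ℓ, k i.succ * (a + 1) := Finset.sum_mul ..
      have h3 : (R + 1) * (a + 1) ≤ (∑ i : Fin ℓ, k i.succ) * (a + 1) :=
        Nat.mul_le_mul_right _ (by omega)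
      have h5 : (R + 1) * (a + 1) = R * (a + 1) + (a + 1) := by ring
      omega
    · -- the reconstructed tuple represents g
      obtain ⟨f, hf⟩ := f
      have hT : ∑ i : Fin ℓ, f i * (a + 1 + i.val) ≤ g := by
        have h1 : ∑ i : Fin ℓ, f i * (a + 1 + i.val) ≤
            ∑ i : Fin ℓ, f i * (a + 1 + (ℓ - 1)) :=
          Finset.sum_le_sum fun i _ => Nat.mul_le_mul_left _ (by omega)
        have h2 : ∑ i : Fin ℓ, f i * (a + 1 + (ℓ - 1)) =
            (∑ i : Fin ℓ, f i) * (a + 1 + (ℓ - 1)) := (Finset.sum_mul ..).symm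
        have h3 : (∑ i : Fin ℓ, f i) * (a + 1 + (ℓ - 1)) ≤
            R * (a + 1 + (ℓ - 1)) := Nat.mul_le_mul_right _ hf
        have h4 : R * (a + 1 + (ℓ - 1)) = R * (a + 1) + (ℓ - 1) * R := by ring_nf
        omega
      simp only [Fin.cons_succ, Fin.cons_zero]
      omega
    · rintro ⟨k, hk⟩
      apply Subtype.ext
      funext i
      refine Fin.cases ?_ ?_ i
      · simp only [Fin.cons_zero]; omega
      · intro j; simp [Fin.cons_succ]
    · rintro ⟨f, hf⟩
      apply Subtype.ext
      funext i
      simp [Fin.cons_succ]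
  rw [Nat.card_congr key, card_sum_le]
end

section
/- Let a, m ≥ 2 with gcd(a,m) = 1 and A = {0, a, m}. For any n ≥ 0, the number ρ_A(n) of pairs (u,v) ∈ (ℤ≥0)² with au + mv = n equals n/(am) − {n·a⁻¹/m} − {n·m⁻¹/a} + 1, where {x} denotes the fractional part, a⁻¹ is an inverse of a mod m, and m⁻¹ is an inverse of m mod a. -/
/-- Popoviciu's formula: for coprime `a, m ≥ 2`, the number of pairs `(u,v)` of
nonnegative integers with `au + mv = n` equals
`n/(am) − {n·a⁻¹/m} − {n·m⁻¹/a} + 1`. -/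
theorem stmt_15 (a m : ℕ) (ha : 2 ≤ a) (hm : 2 ≤ m) (hcop : Nat.Coprime a m)
    (ainv minv : ℕ) (hainv : a * ainv ≡ 1 [MOD m]) (hminv : m * minv ≡ 1 [MOD a])
    (n : ℕ) :
    (Nat.card {p : ℕ × ℕ // a * p.1 + m * p.2 = n} : ℝ)
      = (n : ℝ) / (a * m)
        - Int.fract ((n * ainv : ℝ) / m)
        - Int.fract ((n * minv : ℝ) / a) + 1 := by
  have hm0 : (0:ℕ) < m := by omega
  have ha0 : (0:ℕ) < a := by omega
  set u₀ := n * ainv % m with hu₀def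
  set v₀ := n * minv % a with hv₀def
  have hu0 : u₀ < m := Nat.mod_lt _ hm0
  have hv0 : v₀ < a := Nat.mod_lt _ ha0
  -- a * u₀ ≡ n [MOD m]
  have hau : a * u₀ ≡ n [MOD m] := by
    calc a * u₀ ≡ a * (n * ainv) [MOD m] := Nat.ModEq.mul_left a (Nat.mod_modEq _ m)
      _ = (a * ainv) * n := by ring
      _ ≡ 1 * n [MOD m] := hainv.mul_right n
      _ = n := by ring
  have hmv : m * v₀ ≡ n [MOD a] := by
    calc m * v₀ ≡ m * (n * minv) [MOD a] := Nat.ModEq.mul_left m (Nat.mod_modEq _ a)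
      _ = (m * minv) * n := by ring
      _ ≡ 1 * n [MOD a] := hminv.mul_right n
      _ = n := by ring
  have hdm : (m:ℤ) ∣ ((n:ℤ) - a * u₀ - m * v₀) := by
    have h1 : (m:ℤ) ∣ ((n:ℤ) - a * u₀) := by
      have := hau.dvd
      push_cast at this ⊢
      exact this
    exact dvd_sub h1 (Dvd.intro _ rfl)
  have hda : (a:ℤ) ∣ ((n:ℤ) - a * u₀ - m * v₀) := by
    have h1 : (a:ℤ) ∣ ((n:ℤ) - m * v₀) := by
      have := hmv.dvd
      push_cast at this ⊢
      exact this
    have h2 := dvd_sub h1 (Dvd.intro (↑u₀) rfl : (a:ℤ) ∣ ((a:ℤ) * u₀))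
    have he : (n:ℤ) - a * u₀ - m * v₀ = ((n:ℤ) - m * v₀) - a * u₀ := by ring
    rw [he]; exact h2
  have hcopZ : IsCoprime (a:ℤ) (m:ℤ) := by
    rw [Int.isCoprime_iff_gcd_eq_one]
    exact_mod_cast hcop
  have hdvd : ((a:ℤ) * m) ∣ ((n:ℤ) - a * u₀ - m * v₀) := hcopZ.mul_dvd hda hdm
  set t : ℤ := ((n:ℤ) - a * u₀ - m * v₀) / ((a:ℤ) * m) with htdef
  have ht : ((a:ℤ) * m) * t = (n:ℤ) - a * u₀ - m * v₀ := Int.mul_ediv_cancel' hdvd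
  have htlb : -1 ≤ t := by
    by_contra h
    push_neg at h
    have h2 : t ≤ -2 := by omega
    have hamp : (0:ℤ) < (a:ℤ) * m := by positivity
    have := mul_le_mul_of_nonneg_left h2 (le_of_lt hamp)
    have hu0' : (u₀:ℤ) ≤ (m:ℤ) - 1 := by omega
    have hv0' : (v₀:ℤ) ≤ (a:ℤ) - 1 := by omega
    have hn0 : (0:ℤ) ≤ (n:ℤ) := Int.natCast_nonneg n
    have haZ : (2:ℤ) ≤ a := by exact_mod_cast ha
    have hmZ : (2:ℤ) ≤ m := by exact_mod_cast hm
    nlinarith [ht]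
  set N : ℕ := (t+1).toNat with hNdef
  have hN : (N:ℤ) = t + 1 := Int.toNat_of_nonneg (by omega)
  -- the parametrization
  set f : ℕ → ℕ × ℕ := fun k => (u₀ + k*m, v₀ + (N-1-k)*a) with hfdef
  have hmem : ∀ k < N, a * (f k).1 + m * (f k).2 = n := by
    intro k hk
    have hcast : ((N-1-k : ℕ) : ℤ) = t - k := by omega
    have : ((a * (f k).1 + m * (f k).2 : ℕ) : ℤ) = (n:ℤ) := by
      push_cast [hfdef]
      rw [hcast]
      linear_combination ht
    exact_mod_cast this
  have hsurj : ∀ p : ℕ × ℕ, a * p.1 + m * p.2 = n → ∃ k < N, f k = p := by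
    intro p hp
    set k := p.1 / m with hkdef
    have hmod : p.1 % m = u₀ := by
      have h1 : a * (p.1 % m) ≡ a * u₀ [MOD m] := by
        calc a * (p.1 % m) ≡ a * p.1 [MOD m] := Nat.ModEq.mul_left a (Nat.mod_modEq _ m)
          _ ≡ a * p.1 + m * p.2 [MOD m] := (Nat.modEq_iff_dvd' (Nat.le_add_right _ _)).mpr ⟨p.2, by omega⟩
          _ = n := hp
          _ ≡ a * u₀ [MOD m] := hau.symm
      have h2 : p.1 % m ≡ u₀ [MOD m] := h1.cancel_left_of_coprime hcop.symm
      have hlt : p.1 % m < m := Nat.mod_lt _ hm0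
      have := h2
      unfold Nat.ModEq at this
      rwa [Nat.mod_eq_of_lt hlt, Nat.mod_eq_of_lt hu0] at this
    have hp1 : p.1 = u₀ + k * m := by
      conv_lhs => rw [← Nat.div_add_mod p.1 m]
      rw [hmod]; ring
    -- integer computation for second coordinate
    have hpZ : (m:ℤ) * p.2 = (m:ℤ) * ((v₀:ℤ) + a * (t - k)) := by
      have hpc : (a:ℤ) * p.1 + m * p.2 = n := by exact_mod_cast hp
      have hp1c : (p.1 : ℤ) = u₀ + k * m := by exact_mod_cast hp1
      rw [hp1c] at hpc
      linear_combination hpc - ht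
    have hp2 : (p.2 : ℤ) = (v₀:ℤ) + a * (t - k) := by
      have hmne : (m:ℤ) ≠ 0 := by positivity
      exact mul_left_cancel₀ hmne hpZ
    have hkt : (k:ℤ) ≤ t := by
      by_contra h
      push_neg at h
      have h2 : t - k ≤ -1 := by omega
      have := mul_le_mul_of_nonneg_left h2 (by positivity : (0:ℤ) ≤ (a:ℤ))
      have hp2n : (0:ℤ) ≤ (p.2:ℤ) := Int.natCast_nonneg _
      have hv0' : (v₀:ℤ) < a := by exact_mod_cast hv0
      linarith [hp2]
    have hkN : k < N := by omega
    refine ⟨k, hkN, ?_⟩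
    have hcast : ((N-1-k : ℕ) : ℤ) = t - k := by omega
    have hsnd : v₀ + (N-1-k)*a = p.2 := by
      have : ((v₀ + (N-1-k)*a : ℕ) : ℤ) = (p.2 : ℤ) := by
        push_cast [hcast]
        linarith [hp2]
      exact_mod_cast this
    rw [hfdef]
    exact Prod.ext hp1.symm hsnd
  have hinj : Function.Injective f := by
    intro k₁ k₂ h
    have h1 : u₀ + k₁ * m = u₀ + k₂ * m := congrArg Prod.fst h
    have : k₁ * m = k₂ * m := by omega
    exact Nat.eq_of_mul_eq_mul_right hm0 this
  -- cardinality
  have hset : {p : ℕ × ℕ | a * p.1 + m * p.2 = n} = ↑((Finset.range N).image f) := by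
    ext p
    simp only [Set.mem_setOf_eq, Finset.coe_image, Set.mem_image, Finset.mem_coe,
      Finset.mem_range]
    constructor
    · intro hp
      obtain ⟨k, hk, hfk⟩ := hsurj p hp
      exact ⟨k, hk, hfk⟩
    · rintro ⟨k, hk, rfl⟩
      exact hmem k hk
  have hcard : Nat.card {p : ℕ × ℕ // a * p.1 + m * p.2 = n} = N := by
    have h1 : Nat.card {p : ℕ × ℕ // a * p.1 + m * p.2 = n}
        = ((Finset.range N).image f).card := by
      rw [← Set.ncard_coe_finset, ← hset]
      exact Nat.card_coe_set_eq _
    rw [h1, Finset.card_image_of_injective _ hinj, Finset.card_range]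
  -- fractional parts
  have hfr1 : Int.fract ((n * ainv : ℝ) / m) = (u₀ : ℝ) / m := by
    have hdm : (n * ainv : ℕ) = m * (n * ainv / m) + u₀ := (Nat.div_add_mod _ _).symm
    have hmne : (m:ℝ) ≠ 0 := by positivity
    obtain ⟨q, hdm⟩ : ∃ q : ℕ, n * ainv = m * q + u₀ := ⟨_, hdm⟩
    have hq : (n:ℝ) * ainv = m * (q:ℝ) + u₀ := by exact_mod_cast hdm
    have : (n * ainv : ℝ) / m = ((q : ℕ) : ℤ) + (u₀ : ℝ) / m := by
      rw [hq]; push_cast; field_simp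
    rw [this, Int.fract_intCast_add, Int.fract_eq_self.mpr ⟨by positivity, by
      rw [div_lt_one (by positivity)]; exact_mod_cast hu0⟩]
  have hfr2 : Int.fract ((n * minv : ℝ) / a) = (v₀ : ℝ) / a := by
    have hdm : (n * minv : ℕ) = a * (n * minv / a) + v₀ := (Nat.div_add_mod _ _).symm
    have hane : (a:ℝ) ≠ 0 := by positivity
    obtain ⟨q, hdm⟩ : ∃ q : ℕ, n * minv = a * q + v₀ := ⟨_, hdm⟩
    have hq : (n:ℝ) * minv = a * (q:ℝ) + v₀ := by exact_mod_cast hdm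
    have : (n * minv : ℝ) / a = ((q : ℕ) : ℤ) + (v₀ : ℝ) / a := by
      rw [hq]; push_cast; field_simp
    rw [this, Int.fract_intCast_add, Int.fract_eq_self.mpr ⟨by positivity, by
      rw [div_lt_one (by positivity)]; exact_mod_cast hv0⟩]
  rw [hcard, hfr1, hfr2]
  have hNr : (N:ℝ) = (t:ℝ) + 1 := by exact_mod_cast hN
  have htR : ((a:ℝ) * m) * t = (n:ℝ) - a * u₀ - m * v₀ := by exact_mod_cast ht
  rw [hNr]
  have hane : (a:ℝ) ≠ 0 := by positivity
  have hmne : (m:ℝ) ≠ 0 := by positivity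
  field_simp
  linear_combination htR
end

section
/- Let a, m ≥ 2 with gcd(a,m)=1, A = {0,a,m}, and t ≥ 1. Then P_t(A) = (t−1)am + P(A), where P_t(A) := {n ∈ ℤ≥0 : ρ_A(n) ≥ t} and P(A) = P₁(A) is the numerical semigroup generated by a and m. Consequently, E_t(A) = [0, (t−1)am − 1] ∪ ((t−1)am + E(A)). -/
/-- `ρ_A(n)`: number of pairs `(u,v)` of nonnegative integers with `au + mv = n`. -/
noncomputable def rho (a m n : ℕ) : ℕ := Nat.card {p : ℕ × ℕ // a * p.1 + m * p.2 = n}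

def solset (a m n : ℕ) : Finset (ℕ × ℕ) :=
  (Finset.range (n+1) ×ˢ Finset.range (n+1)).filter (fun p => a * p.1 + m * p.2 = n)

lemma mem_solset {a m n : ℕ} (ha : 1 ≤ a) (hm : 1 ≤ m) {p : ℕ × ℕ} :
    p ∈ solset a m n ↔ a * p.1 + m * p.2 = n := by
  simp only [solset, Finset.mem_filter, Finset.mem_product, Finset.mem_range]
  constructor
  · tauto
  · intro h
    have h1 : p.1 ≤ a * p.1 := Nat.le_mul_of_pos_left _ ha
    have h2 : p.2 ≤ m * p.2 := Nat.le_mul_of_pos_left _ hm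
    omega

lemma rho_eq {a m : ℕ} (ha : 1 ≤ a) (hm : 1 ≤ m) (n : ℕ) :
    rho a m n = (solset a m n).card := by
  have hs : {p : ℕ × ℕ | a * p.1 + m * p.2 = n} = ↑(solset a m n) := by
    ext p; simp [mem_solset ha hm]
  calc rho a m n = Set.ncard {p : ℕ × ℕ | a * p.1 + m * p.2 = n} := rfl
    _ = _ := by rw [hs, Set.ncard_coe_finset]

lemma sol_unique {a m : ℕ} (hm : 1 ≤ m) (hcop : Nat.Coprime a m) {n u v u' v' : ℕ}
    (h : a * u + m * v = n) (h' : a * u' + m * v' = n)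
    (hu : u < m) (hu' : u' < m) : u = u' ∧ v = v' := by
  have hmod : a * u ≡ a * u' [MOD m] := by
    have e1 : a * u ≡ a * u + m * v [MOD m] := (Nat.modEq_iff_dvd' (by omega)).mpr ⟨v, by omega⟩
    have e2 : a * u' ≡ a * u' + m * v' [MOD m] := (Nat.modEq_iff_dvd' (by omega)).mpr ⟨v', by omega⟩
    calc a * u ≡ n [MOD m] := h ▸ e1
      _ ≡ a * u' [MOD m] := (h' ▸ e2).symm
  have huu : u ≡ u' [MOD m] :=
    hmod.cancel_left_of_coprime (by rwa [Nat.coprime_comm, Nat.Coprime] at hcop)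
  have heq : u = u' := huu.eq_of_lt_of_lt hu hu'
  refine ⟨heq, ?_⟩
  subst heq
  have : m * v = m * v' := by omega
  exact Nat.eq_of_mul_eq_mul_left hm this

lemma sol_exists {a m : ℕ} (hm : 1 ≤ m) (hcop : Nat.Coprime a m) {n : ℕ}
    (hn : a * (m - 1) ≤ n) : ∃ u v : ℕ, u < m ∧ a * u + m * v = n := by
  haveI : NeZero m := ⟨by omega⟩
  set x : ZMod m := (a : ZMod m)⁻¹ * (n : ZMod m) with hx
  have hunit : IsUnit (a : ZMod m) := (ZMod.isUnit_iff_coprime a m).mpr hcop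
  refine ⟨x.val, (n - a * x.val) / m, x.val_lt, ?_⟩
  have hcast : ((a * x.val : ℕ) : ZMod m) = (n : ZMod m) := by
    push_cast
    rw [ZMod.natCast_val, ZMod.cast_id, hx, ← mul_assoc, ZMod.mul_inv_of_unit _ hunit, one_mul]
  have hmod : a * x.val ≡ n [MOD m] := (ZMod.natCast_eq_natCast_iff _ _ _).mp hcast
  have hle : a * x.val ≤ n := by
    have := x.val_lt
    have : a * x.val ≤ a * (m - 1) := Nat.mul_le_mul_left a (by omega)
    omega
  have hdvd : m ∣ n - a * x.val := (Nat.modEq_iff_dvd' hle).mp hmod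
  obtain ⟨k, hk⟩ := hdvd
  rw [hk, Nat.mul_div_cancel_left _ (by omega)]
  omega

lemma rho_le_one {a m : ℕ} (ha : 1 ≤ a) (hm : 1 ≤ m) (hcop : Nat.Coprime a m) {n : ℕ}
    (hn : n < a * m) : rho a m n ≤ 1 := by
  rw [rho_eq ha hm]
  apply Finset.card_le_one.mpr
  intro p hp q hq
  rw [mem_solset ha hm] at hp hq
  have hp1 : p.1 < m := by
    by_contra hc
    have : a * m ≤ a * p.1 := Nat.mul_le_mul_left a (by omega)
    omega
  have hq1 : q.1 < m := by
    by_contra hc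
    have : a * m ≤ a * q.1 := Nat.mul_le_mul_left a (by omega)
    omega
  have := sol_unique hm hcop hp hq hp1 hq1
  exact Prod.ext this.1 this.2

lemma rho_succ {a m : ℕ} (ha : 1 ≤ a) (hm : 1 ≤ m) (hcop : Nat.Coprime a m) (n : ℕ) :
    rho a m (n + a * m) = rho a m n + 1 := by
  rw [rho_eq ha hm, rho_eq ha hm]
  rw [← Finset.card_filter_add_card_filter_not
    (p := fun p : ℕ × ℕ => m ≤ p.1) (s := solset a m (n + a * m))]
  congr 1
  · -- big part ≃ solset n
    refine Finset.card_bij' (fun p _ => (p.1 - m, p.2)) (fun p _ => (p.1 + m, p.2))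
      ?mhi ?mhj ?mli ?mri
    case mhi =>
      intro p hp
      simp only [Finset.mem_filter] at hp
      obtain ⟨hp, hpm⟩ := hp
      rw [mem_solset ha hm] at hp ⊢
      simp only
      have key : a * (p.1 - m) + a * m = a * p.1 := by
        rw [← Nat.mul_add]; congr 1; omega
      omega
    case mhj =>
      intro p hp
      rw [mem_solset ha hm] at hp
      simp only [Finset.mem_filter]
      refine ⟨(mem_solset ha hm).mpr ?_, by simp⟩
      simp only
      have key : a * (p.1 + m) = a * p.1 + a * m := by ring
      omega
    case mli =>
      intro p hp
      simp only [Finset.mem_filter] at hp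
      simp only
      rw [Nat.sub_add_cancel hp.2]
    case mri =>
      intro p hp
      simp only
      rw [Nat.add_sub_cancel]
  · -- small part card = 1
    rw [Finset.card_eq_one]
    obtain ⟨u, v, hu, huv⟩ := sol_exists hm hcop (n := n + a * m)
      (by nlinarith [Nat.sub_le m 1])
    refine ⟨(u, v), ?_⟩
    rw [Finset.eq_singleton_iff_unique_mem]
    constructor
    · simp only [Finset.mem_filter]
      exact ⟨(mem_solset ha hm).mpr huv, by simpa using by omega⟩
    · intro q hq
      simp only [Finset.mem_filter, not_le] at hq
      obtain ⟨hq, hq1⟩ := hq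
      rw [mem_solset ha hm] at hq
      have := sol_unique hm hcop hq huv hq1 hu
      exact Prod.ext this.1 this.2

lemma main_iff {a m : ℕ} (ha : 1 ≤ a) (hm : 1 ≤ m) (hcop : Nat.Coprime a m) (t : ℕ)
    (ht : 1 ≤ t) (n : ℕ) :
    t ≤ rho a m n ↔ ∃ n₀ : ℕ, 1 ≤ rho a m n₀ ∧ n = (t - 1) * a * m + n₀ := by
  induction t, ht using Nat.le_induction generalizing n with
  | base => simp
  | succ t ht IH =>
    obtain ⟨s, rfl⟩ : ∃ s, t = s + 1 := ⟨t - 1, by omega⟩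
    constructor
    · intro h
      have hge : a * m ≤ n := by
        by_contra hc
        have := rho_le_one ha hm hcop (n := n) (by omega)
        omega
      obtain ⟨n', rfl⟩ : ∃ n', n = n' + a * m := ⟨n - a * m, by omega⟩
      rw [rho_succ ha hm hcop] at h
      obtain ⟨n₀, h1, h2⟩ := (IH n').mp (by omega)
      refine ⟨n₀, h1, ?_⟩
      rw [h2]
      simp only [Nat.add_sub_cancel]
      ring
    · rintro ⟨n₀, h1, rfl⟩
      simp only [Nat.add_sub_cancel]
      have heq : (s + 1) * a * m + n₀ = ((s + 1 - 1) * a * m + n₀) + a * m := by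
        simp only [Nat.add_sub_cancel]; ring
      rw [heq, rho_succ ha hm hcop]
      have : s + 1 ≤ rho a m ((s + 1 - 1) * a * m + n₀) := (IH _).mpr ⟨n₀, h1, rfl⟩
      omega

/-- `P_t(A) = (t−1)am + P(A)` for `A = {0,a,m}` with `gcd(a,m)=1`; consequently
`E_t(A) = [0,(t−1)am−1] ∪ ((t−1)am + E(A))`. -/
theorem stmt_16 (a m : ℕ) (ha : 2 ≤ a) (hm : 2 ≤ m) (hcop : Nat.Coprime a m)
    (t : ℕ) (ht : 1 ≤ t) :
    (∀ n : ℕ, t ≤ rho a m n ↔ ∃ n₀ : ℕ, 1 ≤ rho a m n₀ ∧ n = (t - 1) * a * m + n₀) ∧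
    (∀ n : ℕ, rho a m n < t ↔
        (n < (t - 1) * a * m ∨ ∃ n₀ : ℕ, rho a m n₀ = 0 ∧ n = (t - 1) * a * m + n₀)) := by
  have ha1 : 1 ≤ a := by omega
  have hm1 : 1 ≤ m := by omega
  have H := fun n => main_iff ha1 hm1 hcop t ht n
  refine ⟨H, fun n => ?_⟩
  rw [← not_le, H n]
  constructor
  · intro hne
    by_cases hlt : n < (t - 1) * a * m
    · exact Or.inl hlt
    · refine Or.inr ⟨n - (t - 1) * a * m, ?_, by omega⟩
      by_contra hc
      exact hne ⟨n - (t - 1) * a * m, by omega, by omega⟩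
  · rintro (hlt | ⟨n₀, h0, rfl⟩) ⟨n₀', h1, h2⟩
    · omega
    · have he : n₀' = n₀ := by omega
      subst he
      omega
end

section
/- Let a, m ≥ 2 with gcd(a,m)=1, A = {0,a,m}, and t ≥ 1. Then Fr_t(A) = t·am − a − m, i.e., t·am − a − m has fewer than t representations au+mv (u,v ≥ 0), while every larger integer has at least t such representations. -/
open Finset in
lemma rho_eq_card (a m n : ℕ) (ha : 1 ≤ a) (hm : 1 ≤ m) :
    rho a m n = ((range (n+1) ×ˢ range (n+1)).filter
      (fun p : ℕ × ℕ => a * p.1 + m * p.2 = n)).card := by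
  have hset : {p : ℕ × ℕ | a * p.1 + m * p.2 = n} =
      ↑((range (n+1) ×ˢ range (n+1)).filter (fun p : ℕ × ℕ => a * p.1 + m * p.2 = n)) := by
    ext ⟨u, v⟩
    simp only [Set.mem_setOf_eq, coe_filter, mem_product, mem_range, Set.mem_setOf_eq]
    constructor
    · intro h
      refine ⟨⟨?_, ?_⟩, h⟩ <;> nlinarith
    · exact fun h => h.2
  show Nat.card ↥{p : ℕ × ℕ | a * p.1 + m * p.2 = n} = _
  rw [Nat.card_coe_set_eq, hset, Set.ncard_coe_finset]

lemma lower (a m n t u v : ℕ) (ha : 1 ≤ a) (hm : 1 ≤ m)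
    (heq : a * u + m * v = n) (hv : (t - 1) * a ≤ v) : t ≤ rho a m n := by
  rw [rho_eq_card a m n ha hm]
  have hc : t = (Finset.range t).card := (Finset.card_range t).symm
  rw [hc]
  apply Finset.card_le_card_of_injOn (fun k => (u + k * m, v - k * a))
  · intro k hk
    simp only [Finset.mem_coe, Finset.mem_range] at hk
    have hka : k * a ≤ v := le_trans (Nat.mul_le_mul_right a (by omega)) hv
    have h2 : m * (v - k * a) = m * v - a * (k * m) := by
      rw [Nat.mul_sub]
      have e : m * (k * a) = a * (k * m) := by ring
      rw [e]
    have h3 : a * (u + k * m) = a * u + a * (k * m) := by ring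
    have h4 : a * (k * m) ≤ m * v := by
      calc a * (k * m) = m * (k * a) := by ring
      _ ≤ m * v := Nat.mul_le_mul_left _ hka
    simp only [Finset.mem_coe, Finset.mem_filter, Finset.mem_product, Finset.mem_range]
    refine ⟨⟨?_, ?_⟩, by omega⟩
    · have := Nat.le_mul_of_pos_left (u + k * m) (show 0 < a by omega)
      omega
    · have := Nat.le_mul_of_pos_left v (show 0 < m by omega)
      omega
  · intro k hk k' hk' hEq
    have h1 : u + k * m = u + k' * m := congrArg Prod.fst hEq
    have h2 : k * m = k' * m := by omega
    exact Nat.eq_of_mul_eq_mul_right (by omega) h2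

/-- `Fr_t({0,a,m}) = t·am − a − m`: this number has fewer than `t` representations
`au + mv`, while every larger integer has at least `t` such representations. -/
theorem stmt_17 (a m : ℕ) (ha : 2 ≤ a) (hm : 2 ≤ m) (hcop : Nat.Coprime a m)
    (t : ℕ) (ht : 1 ≤ t) :
    rho a m (t * a * m - a - m) < t ∧
    ∀ n : ℕ, t * a * m - a - m < n → t ≤ rho a m n := by
  have ha1 : 1 ≤ a := by omega
  have hm1 : 1 ≤ m := by omega
  have ham : a + m ≤ t * a * m := by
    obtain ⟨a', rfl⟩ : ∃ a', a = a' + 2 := ⟨a - 2, by omega⟩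
    obtain ⟨m', rfl⟩ : ∃ m', m = m' + 2 := ⟨m - 2, by omega⟩
    obtain ⟨t', rfl⟩ : ∃ t', t = t' + 1 := ⟨t - 1, by omega⟩
    have h1 : (a' + 2) * (m' + 2) ≤ (t' + 1) * ((a' + 2) * (m' + 2)) :=
      Nat.le_mul_of_pos_left _ (by omega)
    have h2 : (t' + 1) * ((a' + 2) * (m' + 2)) = (t' + 1) * (a' + 2) * (m' + 2) :=
      (mul_assoc _ _ _).symm
    have h3 : (a' + 2) * (m' + 2) = a' * m' + 2 * a' + 2 * m' + 4 := by ring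
    omega
  set n₀ := t * a * m - a - m with hn₀
  constructor
  · -- upper bound: rho n₀ ≤ t - 1
    rw [rho_eq_card a m n₀ ha1 hm1]
    have key : ∀ u v : ℕ, a * u + m * v = n₀ → ∃ j, 1 ≤ j ∧ j < t ∧ v + 1 = a * j := by
      intro u v huv
      have hsum : a * u + m * v + a + m = t * a * m := by omega
      have hu1 : u + 1 ≤ t * m := by nlinarith
      have hmv : m * (v + 1) = a * (t * m - (u + 1)) := by
        have e : a * (t * m - (u + 1)) = a * (t * m) - a * (u + 1) := Nat.mul_sub a _ _
        have e2 : a * (t * m) = t * a * m := by ring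
        have e3 : a * (u + 1) = a * u + a := by ring
        have e4 : a * (u + 1) ≤ a * (t * m) := Nat.mul_le_mul_left a hu1
        have e5 : m * (v + 1) = m * v + m := by ring
        omega
      have hdvd : a ∣ v + 1 := hcop.dvd_of_dvd_mul_left ⟨t * m - (u + 1), hmv⟩
      obtain ⟨j, hj⟩ := hdvd
      have hj1 : 1 ≤ j := by
        rcases Nat.eq_zero_or_pos j with h | h
        · subst h; simp at hj
        · exact h
      have h0 : m * (a * j) = a * (t * m - (u + 1)) := by rw [← hj]; exact hmv
      have hmj : a * (m * j) = a * (t * m - (u + 1)) := by rw [← h0]; ring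
      have hmj2 : m * j = t * m - (u + 1) := Nat.eq_of_mul_eq_mul_left (by omega) hmj
      have hmt : m * t = t * m := Nat.mul_comm m t
      have hjt : m * j < m * t := by omega
      exact ⟨j, hj1, Nat.lt_of_mul_lt_mul_left hjt, hj⟩
    calc _ ≤ (Finset.range (t - 1)).card := by
          apply Finset.card_le_card_of_injOn (fun p => (p.2 + 1) / a - 1)
          · intro p hp
            simp only [Finset.mem_coe, Finset.mem_filter, Finset.mem_product] at hp
            obtain ⟨j, hj1, hj2, hj3⟩ := key p.1 p.2 hp.2
            have : (p.2 + 1) / a = j := by rw [hj3]; exact Nat.mul_div_cancel_left j (by omega)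
            simp only [Finset.mem_coe, Finset.mem_range, this]
            omega
          · intro p hp q hq hpq
            simp only [Finset.mem_coe, Finset.mem_filter, Finset.mem_product] at hp hq
            obtain ⟨j, hj1, hj2, hj3⟩ := key p.1 p.2 hp.2
            obtain ⟨j', hj1', hj2', hj3'⟩ := key q.1 q.2 hq.2
            have e1 : (p.2 + 1) / a = j := by rw [hj3]; exact Nat.mul_div_cancel_left j (by omega)
            have e2 : (q.2 + 1) / a = j' := by rw [hj3']; exact Nat.mul_div_cancel_left j' (by omega)
            simp only [e1, e2] at hpq
            have hj : j = j' := by omega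
            have hv : p.2 = q.2 := by subst hj; omega
            have hu : p.1 = q.1 := by
              have hepq : a * p.1 + m * p.2 = a * q.1 + m * q.2 := by rw [hp.2, hq.2]
              rw [hv] at hepq
              have : a * p.1 = a * q.1 := by omega
              exact Nat.eq_of_mul_eq_mul_left (by omega) this
            exact Prod.ext hu hv
      _ = t - 1 := Finset.card_range _
      _ < t := by omega
  · -- lower bound
    intro n hn
    have hn' : t * a * m < n + a + m := by omega
    haveI : NeZero m := ⟨by omega⟩
    set u0 := ((n : ZMod m) * (a : ZMod m)⁻¹).val with hu0def
    have hu0lt : u0 < m := ZMod.val_lt _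
    have hunit : IsUnit (a : ZMod m) := (ZMod.isUnit_iff_coprime a m).mpr hcop
    have hmod : a * u0 ≡ n [MOD m] := by
      have : ((a * u0 : ℕ) : ZMod m) = (n : ZMod m) := by
        push_cast
        rw [hu0def, ZMod.natCast_val, ZMod.cast_id]
        rw [← mul_assoc, mul_comm (a : ZMod m) (n : ZMod m), mul_assoc,
          ZMod.mul_inv_of_unit _ hunit, mul_one]
      exact (ZMod.natCast_eq_natCast_iff _ _ _).mp this
    have hbig : a * u0 + (t - 1) * a * m ≤ n := by
      by_contra hlt
      push_neg at hlt
      have hX : a * u0 + (t - 1) * a * m ≡ n [MOD m] := by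
        have : (a * u0 + (t - 1) * a * m) % m = (a * u0) % m :=
          Nat.add_mul_mod_self_right ..
        unfold Nat.ModEq
        rw [this]; exact hmod
      have hdvd : m ∣ (a * u0 + (t - 1) * a * m) - n :=
        (Nat.modEq_iff_dvd' (by omega)).mp hX.symm
      have hge : n + m ≤ a * u0 + (t - 1) * a * m := by
        obtain ⟨c, hc⟩ := hdvd
        have : c ≠ 0 := by rintro rfl; omega
        have : m ≤ m * c := Nat.le_mul_of_pos_right m (by omega)
        omega
      have hub : a * u0 + (t - 1) * a * m + a + m ≤ t * a * m := by
        have h1 : a * u0 ≤ a * (m - 1) := Nat.mul_le_mul_left a (by omega)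
        have h2 : a * (m - 1) + a = a * m := by
          have h5 : a ≤ a * m := Nat.le_mul_of_pos_right a (by omega)
          rw [Nat.mul_sub, mul_one]; omega
        have h3 : (t - 1) * a * m + a * m = t * a * m := by
          have : (t - 1) * a * m = t * a * m - a * m := by
            rw [Nat.sub_mul, Nat.sub_mul, one_mul]
          have h4 : a * m ≤ t * a * m := by nlinarith
          omega
        omega
      omega
    have hle : a * u0 ≤ n := by omega
    have hdvd : m ∣ n - a * u0 := (Nat.modEq_iff_dvd' hle).mp hmod
    obtain ⟨v0, hv0⟩ := hdvd
    have heq : a * u0 + m * v0 = n := by omega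
    have hv : (t - 1) * a ≤ v0 := by
      have h1 : (t - 1) * a * m ≤ m * v0 := by omega
      have h2 : m * ((t - 1) * a) ≤ m * v0 := by
        have : m * ((t - 1) * a) = (t - 1) * a * m := by ring
        omega
      exact Nat.le_of_mul_le_mul_left h2 (by omega)
    exact lower a m n t u0 v0 ha1 hm1 heq hv
end
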